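/- Let (A,∘,∗) be a dual pre-Poisson algebra and R : A → A a Rota–Baxter operator of weight λ. Define new bilinear operations a∘_R b := R(a)∘b + a∘R(b) + λ(a∘b) and a∗_R b := R(a)∗b + a∗R(b) + λ(a∗b). Then (A,∘_R,∗_R) is a dual pre-Poisson algebra, and R is a homomorphism of DPP algebras from (A,∘_R,∗_R) to (A,∘,∗), i.e. R(a∘_R b) = R(a)∘R(b) and R(a∗_R b) = R(a)∗R(b) for all a,b ∈ A. -/

import Mathlib

open TensorProduct LinearMap

/-- The axioms of a dual pre-Poisson (DPP) algebra. -/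
structure IsDPP {k A : Type*} [Field k] [AddCommGroup A] [Module k A]
    (c s : A →ₗ[k] A →ₗ[k] A) : Prop where
  perm_assoc : ∀ a b d : A, c a (c b d) = c (c a b) d
  perm_comm : ∀ a b d : A, c (c a b) d = c (c b a) d
  leibniz : ∀ a b d : A, s a (s b d) = s (s a b) d + s b (s a d)
  comp1 : ∀ a b d : A, s (c a b) d = c a (s b d) + c b (s a d)
  comp2 : ∀ a b d : A, c (s a b) d = s a (c b d) - c b (s a d)
  comp3 : ∀ a b d : A, c (s a b) d = - c (s b a) d

/-- If `R` is a Rota–Baxter operator of weight `λ` on a DPP algebra `(A, ∘, ∗)`, then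
the derived operations `a ∘_R b = R(a)∘b + a∘R(b) + λ(a∘b)` and
`a ∗_R b = R(a)∗b + a∗R(b) + λ(a∗b)` again form a DPP algebra, and `R` is a homomorphism
of DPP algebras from `(A, ∘_R, ∗_R)` to `(A, ∘, ∗)`. -/
theorem stmt1 {k A : Type*} [Field k] [CharZero k] [AddCommGroup A] [Module k A]
    (c s : A →ₗ[k] A →ₗ[k] A) (h : IsDPP c s) (R : A →ₗ[k] A) (lam : k)
    (hRB1 : ∀ a b : A, c (R a) (R b) = R (c (R a) b + c a (R b) + lam • c a b))
    (hRB2 : ∀ a b : A, s (R a) (R b) = R (s (R a) b + s a (R b) + lam • s a b)) :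
    IsDPP (c ∘ₗ R + c.compl₂ R + lam • c) (s ∘ₗ R + s.compl₂ R + lam • s) ∧
    (∀ a b : A, R ((c ∘ₗ R + c.compl₂ R + lam • c) a b) = c (R a) (R b)) ∧
    (∀ a b : A, R ((s ∘ₗ R + s.compl₂ R + lam • s) a b) = s (R a) (R b)) := by
  refine ⟨⟨?_, ?_, ?_, ?_, ?_, ?_⟩, ?_, ?_⟩
  · -- perm_assoc
    intro a b d
    simp only [LinearMap.add_apply, comp_apply, compl₂_apply, LinearMap.smul_apply]
    rw [← hRB1 b d, ← hRB1 a b]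
    simp only [map_add, map_smul, smul_add, smul_smul, LinearMap.add_apply, LinearMap.smul_apply, map_neg, LinearMap.neg_apply]
    simp only [h.perm_assoc]
    module
  · -- perm_comm
    intro a b d
    simp only [LinearMap.add_apply, comp_apply, compl₂_apply, LinearMap.smul_apply]
    rw [← hRB1 a b, ← hRB1 b a]
    simp only [map_add, map_smul, smul_add, smul_smul, LinearMap.add_apply, LinearMap.smul_apply, map_neg, LinearMap.neg_apply]
    rw [h.perm_comm (R b) (R a) d, h.perm_comm (R b) a (R d), h.perm_comm b (R a) (R d),
      h.perm_comm b a (R d), h.perm_comm (R b) a d, h.perm_comm b (R a) d, h.perm_comm b a d]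
    module
  · -- leibniz
    intro a b d
    simp only [LinearMap.add_apply, comp_apply, compl₂_apply, LinearMap.smul_apply]
    rw [← hRB2 b d, ← hRB2 a b, ← hRB2 a d]
    simp only [map_add, map_smul, smul_add, smul_smul, LinearMap.add_apply, LinearMap.smul_apply, map_neg, LinearMap.neg_apply]
    rw [h.leibniz (R a) (R b) d, h.leibniz (R a) b (R d), h.leibniz a (R b) (R d),
      h.leibniz a b (R d), h.leibniz (R a) b d, h.leibniz a (R b) d, h.leibniz a b d]
    module
  · -- comp1
    intro a b d
    simp only [LinearMap.add_apply, comp_apply, compl₂_apply, LinearMap.smul_apply]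
    rw [← hRB1 a b, ← hRB2 b d, ← hRB2 a d]
    simp only [map_add, map_smul, smul_add, smul_smul, LinearMap.add_apply, LinearMap.smul_apply, map_neg, LinearMap.neg_apply]
    rw [h.comp1 (R a) (R b) d, h.comp1 (R a) b (R d), h.comp1 a (R b) (R d),
      h.comp1 a b (R d), h.comp1 (R a) b d, h.comp1 a (R b) d, h.comp1 a b d]
    module
  · -- comp2
    intro a b d
    simp only [LinearMap.add_apply, comp_apply, compl₂_apply, LinearMap.smul_apply]
    rw [← hRB2 a b, ← hRB1 b d, ← hRB2 a d]
    simp only [map_add, map_smul, smul_add, smul_smul, LinearMap.add_apply, LinearMap.smul_apply, map_neg, LinearMap.neg_apply]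
    rw [h.comp2 (R a) (R b) d, h.comp2 (R a) b (R d), h.comp2 a (R b) (R d),
      h.comp2 a b (R d), h.comp2 (R a) b d, h.comp2 a (R b) d, h.comp2 a b d]
    module
  · -- comp3
    intro a b d
    simp only [LinearMap.add_apply, comp_apply, compl₂_apply, LinearMap.smul_apply]
    rw [← hRB2 a b, ← hRB2 b a]
    simp only [map_add, map_smul, smul_add, smul_smul, LinearMap.add_apply, LinearMap.smul_apply, map_neg, LinearMap.neg_apply]
    rw [h.comp3 (R a) (R b) d, h.comp3 (R a) b (R d), h.comp3 a (R b) (R d),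
      h.comp3 a b (R d), h.comp3 (R a) b d, h.comp3 a (R b) d, h.comp3 a b d]
    module
  · intro a b
    simp only [LinearMap.add_apply, comp_apply, compl₂_apply, LinearMap.smul_apply]
    exact (hRB1 a b).symm
  · intro a b
    simp only [LinearMap.add_apply, comp_apply, compl₂_apply, LinearMap.smul_apply]
    exact (hRB2 a b).symm
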